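/- arXiv:2605.15767 — 4 statements merged into one kernel-verified Lean document; each statement's English description precedes it below -/
import Mathlib

section
/- Let ω_x, ω_v ∈ ℝ satisfy ω_x ≠ 0, ω_v ≠ 0, ω_x ≠ ω_v and ω_x ≠ −ω_v, and let c ∈ ℝ. Define G : ℝ² → ℝ by G(a,b) = c·[ sin(2a)/(8 ω_x) + sin(2b)/(8 ω_v) − sin(2(a−b))/(16 (ω_x − ω_v)) − sin(2(a+b))/(16 (ω_x + ω_v)) ]. Then for all (a,b) ∈ ℝ², ω_x · ∂G/∂a (a,b) + ω_v · ∂G/∂b (a,b) = c·(1/4 − sin²a · sin²b). -/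
/-- The generating function G solves the first-order homological equation
ωx ∂G/∂a + ωv ∂G/∂b = c (1/4 − sin²a sin²b) under the nonresonance conditions. -/
theorem homological_equation_solution
    (ωx ωv : ℝ) (hωx : ωx ≠ 0) (hωv : ωv ≠ 0) (h1 : ωx ≠ ωv) (h2 : ωx ≠ -ωv)
    (c : ℝ)
    (G : ℝ → ℝ → ℝ)
    (hG : ∀ a b : ℝ, G a b =
      c * (Real.sin (2 * a) / (8 * ωx) + Real.sin (2 * b) / (8 * ωv)
        - Real.sin (2 * (a - b)) / (16 * (ωx - ωv))
        - Real.sin (2 * (a + b)) / (16 * (ωx + ωv)))) :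
    ∀ a b : ℝ,
      ωx * deriv (fun a' => G a' b) a + ωv * deriv (fun b' => G a b') b
        = c * (1 / 4 - Real.sin a ^ 2 * Real.sin b ^ 2) := by
  intro a b
  have hxy : ωx - ωv ≠ 0 := sub_ne_zero.mpr h1
  have hxy' : ωx + ωv ≠ 0 := fun h => h2 (by linarith [h])
  -- derivative in a
  have hla : HasDerivAt (fun a' : ℝ => 2 * a') 2 a := by
    simpa using (hasDerivAt_id a).const_mul 2
  have hsa : HasDerivAt (fun a' : ℝ => Real.sin (2 * a')) (Real.cos (2 * a) * 2) a :=
    (Real.hasDerivAt_sin (2 * a)).comp a hla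
  have hlma : HasDerivAt (fun a' : ℝ => 2 * (a' - b)) 2 a := by
    simpa using ((hasDerivAt_id a).sub_const b).const_mul 2
  have hsma : HasDerivAt (fun a' : ℝ => Real.sin (2 * (a' - b)))
      (Real.cos (2 * (a - b)) * 2) a :=
    by have := (Real.hasDerivAt_sin (2 * (a - b))).comp a hlma; exact this
  have hlpa : HasDerivAt (fun a' : ℝ => 2 * (a' + b)) 2 a := by
    simpa using ((hasDerivAt_id a).add_const b).const_mul 2
  have hspa : HasDerivAt (fun a' : ℝ => Real.sin (2 * (a' + b)))
      (Real.cos (2 * (a + b)) * 2) a :=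
    by have := (Real.hasDerivAt_sin (2 * (a + b))).comp a hlpa; exact this
  have hGa : HasDerivAt (fun a' => G a' b)
      (c * (Real.cos (2 * a) * 2 / (8 * ωx)
        - Real.cos (2 * (a - b)) * 2 / (16 * (ωx - ωv))
        - Real.cos (2 * (a + b)) * 2 / (16 * (ωx + ωv)))) a := by
    have : HasDerivAt (fun a' => c * (Real.sin (2 * a') / (8 * ωx)
        + Real.sin (2 * b) / (8 * ωv)
        - Real.sin (2 * (a' - b)) / (16 * (ωx - ωv))
        - Real.sin (2 * (a' + b)) / (16 * (ωx + ωv))))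
        (c * (Real.cos (2 * a) * 2 / (8 * ωx)
          - Real.cos (2 * (a - b)) * 2 / (16 * (ωx - ωv))
          - Real.cos (2 * (a + b)) * 2 / (16 * (ωx + ωv)))) a :=
      ((((hsa.div_const _).add_const _).sub (hsma.div_const _)).sub
        (hspa.div_const _)).const_mul c
    simpa [hG] using this
  -- derivative in b
  have hlb : HasDerivAt (fun b' : ℝ => 2 * b') 2 b := by
    simpa using (hasDerivAt_id b).const_mul 2
  have hsb : HasDerivAt (fun b' : ℝ => Real.sin (2 * b')) (Real.cos (2 * b) * 2) b :=
    (Real.hasDerivAt_sin (2 * b)).comp b hlb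
  have hlmb : HasDerivAt (fun b' : ℝ => 2 * (a - b')) (-2) b := by
    simpa using ((hasDerivAt_id b).const_sub a).const_mul 2
  have hsmb : HasDerivAt (fun b' : ℝ => Real.sin (2 * (a - b')))
      (Real.cos (2 * (a - b)) * (-2)) b :=
    by have := (Real.hasDerivAt_sin (2 * (a - b))).comp b hlmb; exact this
  have hlpb : HasDerivAt (fun b' : ℝ => 2 * (a + b')) 2 b := by
    simpa using ((hasDerivAt_id b).const_add a).const_mul 2
  have hspb : HasDerivAt (fun b' : ℝ => Real.sin (2 * (a + b')))
      (Real.cos (2 * (a + b)) * 2) b :=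
    by have := (Real.hasDerivAt_sin (2 * (a + b))).comp b hlpb; exact this
  have hGb : HasDerivAt (fun b' => G a b')
      (c * (Real.cos (2 * b) * 2 / (8 * ωv)
        - Real.cos (2 * (a - b)) * (-2) / (16 * (ωx - ωv))
        - Real.cos (2 * (a + b)) * 2 / (16 * (ωx + ωv)))) b := by
    have : HasDerivAt (fun b' => c * (Real.sin (2 * a) / (8 * ωx)
        + Real.sin (2 * b') / (8 * ωv)
        - Real.sin (2 * (a - b')) / (16 * (ωx - ωv))
        - Real.sin (2 * (a + b')) / (16 * (ωx + ωv))))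
        (c * (Real.cos (2 * b) * 2 / (8 * ωv)
          - Real.cos (2 * (a - b)) * (-2) / (16 * (ωx - ωv))
          - Real.cos (2 * (a + b)) * 2 / (16 * (ωx + ωv)))) b :=
      (((hsb.div_const _).const_add _).sub (hsmb.div_const _)).sub
        (hspb.div_const _) |>.const_mul c
    simpa [hG] using this
  rw [hGa.deriv, hGb.deriv]
  -- trigonometric identity
  have e1 : Real.cos (2 * a) = 1 - 2 * Real.sin a ^ 2 := Real.cos_two_mul' a ▸ by
    rw [Real.cos_sq']; ring
  have e2 : Real.cos (2 * b) = 1 - 2 * Real.sin b ^ 2 := by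
    rw [Real.cos_two_mul, Real.cos_sq']; ring
  have e3 : Real.cos (2 * (a - b)) + Real.cos (2 * (a + b))
      = 2 * Real.cos (2 * a) * Real.cos (2 * b) := by
    have := Real.cos_add (2 * a) (2 * b)
    have := Real.cos_sub (2 * a) (2 * b)
    rw [show 2 * (a - b) = 2 * a - 2 * b by ring,
      show 2 * (a + b) = 2 * a + 2 * b by ring,
      Real.cos_add, Real.cos_sub]; ring
  rw [e1, e2] at e3
  have hsimp : ωx * (c * (Real.cos (2 * a) * 2 / (8 * ωx)
        - Real.cos (2 * (a - b)) * 2 / (16 * (ωx - ωv))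
        - Real.cos (2 * (a + b)) * 2 / (16 * (ωx + ωv))))
      + ωv * (c * (Real.cos (2 * b) * 2 / (8 * ωv)
        - Real.cos (2 * (a - b)) * (-2) / (16 * (ωx - ωv))
        - Real.cos (2 * (a + b)) * 2 / (16 * (ωx + ωv))))
      = c * (Real.cos (2 * a) / 4 + Real.cos (2 * b) / 4
        - (Real.cos (2 * (a - b)) + Real.cos (2 * (a + b))) / 8) := by
    field_simp
    ring
  rw [hsimp]
  linear_combination (c / 4) * e1 + (c / 4) * e2 - (c / 8) * e3
end

section
/- Let K_x, K_v, M_x, M_v > 0, set ω_x = K_x/M_x, ω_v = K_v/M_v, and assume ω_x ≠ 0, ω_v ≠ 0, ω_x ≠ ω_v, ω_x ≠ −ω_v. Fix actions I'_x, I'_v ∈ ℝ, set c = 2 I'_x I'_v/(K_x K_v), and let G : ℝ² → ℝ be G(θ_x,θ_v) = c·[ sin(2θ_x)/(8ω_x) + sin(2θ_v)/(8ω_v) − sin(2(θ_x−θ_v))/(16(ω_x−ω_v)) − sin(2(θ_x+θ_v))/(16(ω_x+ω_v)) ]. Write f(J_x, J_v, θ_x, θ_v) = (2 J_x J_v/(K_x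 K_v)) sin²θ_x sin²θ_v. Then for all ε ∈ ℝ and all θ_x, θ_v ∈ ℝ: ω_x·(I'_x + ε ∂_{θ_x}G) + ω_v·(I'_v + ε ∂_{θ_v}G) + ε·f(I'_x + ε ∂_{θ_x}G, I'_v + ε ∂_{θ_v}G, θ_x, θ_v) = ω_x I'_x + ω_v I'_v + ε·I'_x I'_v/(2 K_x K_v) + ε²·(2/(K_x K_v))·sin²θ_x·sin²θ_v·( I'_x ∂_{θ_v}G + I'_v ∂_{θ_x}G + ε ∂_{θ_x}G · ∂_{θ_v}G ). -/
set_option maxHeartbeats 1000000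

private lemma sinlin (m k θ : ℝ) :
    HasDerivAt (fun a : ℝ => Real.sin (m * a + k)) (m * Real.cos (m * θ + k)) θ := by
  have h : HasDerivAt (fun a : ℝ => m * a + k) m θ := by
    simpa using ((hasDerivAt_id θ).const_mul m).add_const k
  simpa [mul_comm, Function.comp_def] using (Real.hasDerivAt_sin (m * θ + k)).comp θ h

/-- Exact first-order KAM normal-form computation for the market Hamiltonian:
after the type-II canonical transformation generated by S = I'x θx + I'v θv + ε G,
the Hamiltonian equals ωx I'x + ωv I'v + ε I'x I'v/(2 Kx Kv) plus an explicit
remainder of order ε². -/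
theorem kam_first_order_normal_form
    (Kx Kv Mx Mv : ℝ) (hKx : 0 < Kx) (hKv : 0 < Kv) (hMx : 0 < Mx) (hMv : 0 < Mv)
    (ωx ωv : ℝ) (hωxdef : ωx = Kx / Mx) (hωvdef : ωv = Kv / Mv)
    (hωx : ωx ≠ 0) (hωv : ωv ≠ 0) (h1 : ωx ≠ ωv) (h2 : ωx ≠ -ωv)
    (Ix' Iv' : ℝ) (c : ℝ) (hc : c = 2 * Ix' * Iv' / (Kx * Kv))
    (G : ℝ → ℝ → ℝ)
    (hG : ∀ a b : ℝ, G a b =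
      c * (Real.sin (2 * a) / (8 * ωx) + Real.sin (2 * b) / (8 * ωv)
        - Real.sin (2 * (a - b)) / (16 * (ωx - ωv))
        - Real.sin (2 * (a + b)) / (16 * (ωx + ωv))))
    (f : ℝ → ℝ → ℝ → ℝ → ℝ)
    (hf : ∀ Jx Jv a b : ℝ, f Jx Jv a b =
      (2 * Jx * Jv / (Kx * Kv)) * Real.sin a ^ 2 * Real.sin b ^ 2) :
    ∀ ε θx θv : ℝ,
      ωx * (Ix' + ε * deriv (fun a => G a θv) θx)
        + ωv * (Iv' + ε * deriv (fun b => G θx b) θv)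
        + ε * f (Ix' + ε * deriv (fun a => G a θv) θx)
                (Iv' + ε * deriv (fun b => G θx b) θv) θx θv
      = ωx * Ix' + ωv * Iv' + ε * (Ix' * Iv' / (2 * Kx * Kv))
        + ε ^ 2 * (2 / (Kx * Kv)) * Real.sin θx ^ 2 * Real.sin θv ^ 2 *
            (Ix' * deriv (fun b => G θx b) θv + Iv' * deriv (fun a => G a θv) θx
              + ε * deriv (fun a => G a θv) θx * deriv (fun b => G θx b) θv) := by
  intro ε θx θv
  have hsub : ωx - ωv ≠ 0 := sub_ne_zero.mpr h1
  have hadd : ωx + ωv ≠ 0 := by intro h; exact h2 (by linarith)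
  -- derivative in the first variable
  have hDx : HasDerivAt (fun a => G a θv)
      (c * (2 * Real.cos (2 * θx) / (8 * ωx)
        - 2 * Real.cos (2 * (θx - θv)) / (16 * (ωx - ωv))
        - 2 * Real.cos (2 * (θx + θv)) / (16 * (ωx + ωv)))) θx := by
    have e1 : HasDerivAt (fun a : ℝ => Real.sin (2 * a)) (2 * Real.cos (2 * θx)) θx := by
      simpa using sinlin 2 0 θx
    have e2 : HasDerivAt (fun a : ℝ => Real.sin (2 * (a - θv)))
        (2 * Real.cos (2 * (θx - θv))) θx := by
      have h := sinlin 2 (-(2 * θv)) θx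
      simp only [show ∀ a : ℝ, 2 * a + -(2 * θv) = 2 * (a - θv) from fun a => by ring] at h
      exact h
    have e3 : HasDerivAt (fun a : ℝ => Real.sin (2 * (a + θv)))
        (2 * Real.cos (2 * (θx + θv))) θx := by
      have h := sinlin 2 (2 * θv) θx
      simp only [show ∀ a : ℝ, 2 * a + 2 * θv = 2 * (a + θv) from fun a => by ring] at h
      exact h
    have h := ((((e1.div_const (8 * ωx)).add_const (Real.sin (2 * θv) / (8 * ωv))).sub
      (e2.div_const (16 * (ωx - ωv)))).sub (e3.div_const (16 * (ωx + ωv)))).const_mul c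
    exact h.congr_of_eventuallyEq (Filter.Eventually.of_forall fun a => (hG a θv))
  -- derivative in the second variable
  have hDv : HasDerivAt (fun b => G θx b)
      (c * (2 * Real.cos (2 * θv) / (8 * ωv)
        + 2 * Real.cos (2 * (θx - θv)) / (16 * (ωx - ωv))
        - 2 * Real.cos (2 * (θx + θv)) / (16 * (ωx + ωv)))) θv := by
    have e1 : HasDerivAt (fun b : ℝ => Real.sin (2 * b)) (2 * Real.cos (2 * θv)) θv := by
      simpa using sinlin 2 0 θv
    have e2 : HasDerivAt (fun b : ℝ => Real.sin (2 * (θx - b)))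
        (-2 * Real.cos (2 * (θx - θv))) θv := by
      have h := sinlin (-2) (2 * θx) θv
      simp only [show ∀ b : ℝ, -2 * b + 2 * θx = 2 * (θx - b) from fun b => by ring] at h
      exact h
    have e3 : HasDerivAt (fun b : ℝ => Real.sin (2 * (θx + b)))
        (2 * Real.cos (2 * (θx + θv))) θv := by
      have h := sinlin 2 (2 * θx) θv
      simp only [show ∀ b : ℝ, 2 * b + 2 * θx = 2 * (θx + b) from fun b => by ring] at h
      exact h
    have h := ((((e1.div_const (8 * ωv)).const_add (Real.sin (2 * θx) / (8 * ωx))).sub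
      (e2.div_const (16 * (ωx - ωv)))).sub (e3.div_const (16 * (ωx + ωv)))).const_mul c
    have h' := h.congr_of_eventuallyEq (Filter.Eventually.of_forall fun b => (hG θx b))
    exact h'.congr_deriv (by ring)
  have hDxv := hDx.deriv
  have hDvv := hDv.deriv
  -- trig expansions
  have hcx : Real.cos (2 * θx) = 1 - 2 * Real.sin θx ^ 2 := by
    rw [Real.cos_two_mul', Real.cos_sq']; ring
  have hcv : Real.cos (2 * θv) = 1 - 2 * Real.sin θv ^ 2 := by
    rw [Real.cos_two_mul', Real.cos_sq']; ring
  have hsx : Real.sin (2 * θx) = 2 * Real.sin θx * Real.cos θx := Real.sin_two_mul θx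
  have hsv : Real.sin (2 * θv) = 2 * Real.sin θv * Real.cos θv := Real.sin_two_mul θv
  have hA : Real.cos (2 * (θx - θv))
      = Real.cos (2 * θx) * Real.cos (2 * θv) + Real.sin (2 * θx) * Real.sin (2 * θv) := by
    rw [show 2 * (θx - θv) = 2 * θx - 2 * θv by ring, Real.cos_sub]
  have hB : Real.cos (2 * (θx + θv))
      = Real.cos (2 * θx) * Real.cos (2 * θv) - Real.sin (2 * θx) * Real.sin (2 * θv) := by
    rw [show 2 * (θx + θv) = 2 * θx + 2 * θv by ring, Real.cos_add]
  -- homological identity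
  have key : ωx * deriv (fun a => G a θv) θx + ωv * deriv (fun b => G θx b) θv
      + (2 * Ix' * Iv' / (Kx * Kv)) * Real.sin θx ^ 2 * Real.sin θv ^ 2
      = Ix' * Iv' / (2 * Kx * Kv) := by
    rw [hDxv, hDvv, hc, hA, hB, hcx, hcv, hsx, hsv]
    field_simp
    ring
  rw [hf]
  linear_combination ε * key
end

section
/- Let M_x, M_u > 0, K_x, ε, x₀ ∈ ℝ. Suppose x, v : ℝ → ℝ are twice differentiable, x(t) ≠ 0 for all t, and for all t: (M_x + M_u v²)·ẍ + 2 M_u ẋ v v̇ + M_u x v v̈ + K_x (x − x₀) + ε v² x = 0 and M_u x² v̈ + 2 M_u x ẋ v̇ + M_u x ẍ v + ε v x² = 0. Then for all t: ẍ + (K_x/M_x)(x − x₀) = 0, and v̈ + 2(ẋ/x)·v̇ + ( ε/M_u − K_x(x − x₀)/(M_x x) )·v = 0. -/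
/-- In the dynamic risk-aversion model, the coupled Euler–Lagrange equations imply
that the price is a harmonic oscillator about x₀ and the inventory satisfies a
damped oscillator equation with price-driven damping and stiffness. -/
theorem dynamic_euler_lagrange_decoupled
    (Mx Mu Kx ε x0 : ℝ) (hMx : 0 < Mx) (hMu : 0 < Mu)
    (x v : ℝ → ℝ)
    (hx : Differentiable ℝ x) (hx' : Differentiable ℝ (deriv x))
    (hv : Differentiable ℝ v) (hv' : Differentiable ℝ (deriv v))
    (hx0 : ∀ t, x t ≠ 0)
    (h1 : ∀ t, (Mx + Mu * v t ^ 2) * deriv (deriv x) t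
          + 2 * Mu * deriv x t * v t * deriv v t
          + Mu * x t * v t * deriv (deriv v) t
          + Kx * (x t - x0) + ε * v t ^ 2 * x t = 0)
    (h2 : ∀ t, Mu * x t ^ 2 * deriv (deriv v) t
          + 2 * Mu * x t * deriv x t * deriv v t
          + Mu * x t * deriv (deriv x) t * v t
          + ε * v t * x t ^ 2 = 0) :
    ∀ t, deriv (deriv x) t + (Kx / Mx) * (x t - x0) = 0
      ∧ deriv (deriv v) t + 2 * (deriv x t / x t) * deriv v t
          + (ε / Mu - Kx * (x t - x0) / (Mx * x t)) * v t = 0 := by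
  intro t
  have e1 := h1 t
  have e2 := h2 t
  have hxne := hx0 t
  have A : x t * (Mx * deriv (deriv x) t + Kx * (x t - x0)) = 0 := by
    linear_combination x t * e1 - v t * e2
  have A' : Mx * deriv (deriv x) t + Kx * (x t - x0) = 0 :=
    (mul_eq_zero.mp A).resolve_left hxne
  have B : x t * (Mu * x t * deriv (deriv v) t + 2 * Mu * deriv x t * deriv v t
      + Mu * deriv (deriv x) t * v t + ε * v t * x t) = 0 := by
    linear_combination e2
  have B' : Mu * x t * deriv (deriv v) t + 2 * Mu * deriv x t * deriv v t
      + Mu * deriv (deriv x) t * v t + ε * v t * x t = 0 :=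
    (mul_eq_zero.mp B).resolve_left hxne
  constructor
  · field_simp
    linarith [A']
  · field_simp
    linear_combination Mx * B' - Mu * v t * A'
end

section
/- Let M_x, M_u > 0, K_x, ε, x₀ ∈ ℝ, and let f : ℝ → ℝ be differentiable. Suppose x, v : ℝ → ℝ are twice differentiable, x(t) ≠ 0 for all t, and for all t: (M_x + M_u v²)·ẍ + 2 M_u ẋ v v̇ + M_u x v v̈ + K_x(x − x₀) + ε v² x = 0 and M_u x² v̈ + 2 M_u x ẋ v̇ + M_u x ẍ v + ε v x² + f'(v) = 0. Then for all t: M_x·ẍ + K_x(x − x₀) = (v/x)·f'(v), and v̈ + 2(ẋ/x)·v̇ + ( ε/M_u − K_x(x − x₀)/(M_x x) )·v + (f'(v)/(M_u x²))·(1 + M_u v²/M_x) = 0. -/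
/-- Limited market depth: the coupled Euler–Lagrange equations imply the price is a
driven harmonic oscillator with driving force (v/x)f'(v), and the inventory obeys a
damped oscillator equation with an extra constraint term. -/
theorem limited_depth_euler_lagrange
    (Mx Mu Kx ε x0 : ℝ) (hMx : 0 < Mx) (hMu : 0 < Mu)
    (f : ℝ → ℝ) (hf : Differentiable ℝ f)
    (x v : ℝ → ℝ)
    (hx : Differentiable ℝ x) (hx' : Differentiable ℝ (deriv x))
    (hv : Differentiable ℝ v) (hv' : Differentiable ℝ (deriv v))
    (hx0 : ∀ t, x t ≠ 0)
    (h1 : ∀ t, (Mx + Mu * v t ^ 2) * deriv (deriv x) t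
          + 2 * Mu * deriv x t * v t * deriv v t
          + Mu * x t * v t * deriv (deriv v) t
          + Kx * (x t - x0) + ε * v t ^ 2 * x t = 0)
    (h2 : ∀ t, Mu * x t ^ 2 * deriv (deriv v) t
          + 2 * Mu * x t * deriv x t * deriv v t
          + Mu * x t * deriv (deriv x) t * v t
          + ε * v t * x t ^ 2 + deriv f (v t) = 0) :
    ∀ t, Mx * deriv (deriv x) t + Kx * (x t - x0) = (v t / x t) * deriv f (v t)
      ∧ deriv (deriv v) t + 2 * (deriv x t / x t) * deriv v t
          + (ε / Mu - Kx * (x t - x0) / (Mx * x t)) * v t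
          + (deriv f (v t) / (Mu * x t ^ 2)) * (1 + Mu * v t ^ 2 / Mx) = 0 := by
  intro t
  have H1 := h1 t
  have H2 := h2 t
  have hx0t := hx0 t
  constructor
  · field_simp
    linear_combination x t * H1 - v t * H2
  · have hxne : x t ≠ 0 := hx0t
    have hMxne : Mx ≠ 0 := ne_of_gt hMx
    have hMune : Mu ≠ 0 := ne_of_gt hMu
    field_simp
    linear_combination ((Mx + Mu * v t ^ 2) * H2 - Mu * v t * x t * H1)
end
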